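/- Let a, b > 0 with a ≠ b and C_2 ≥ 0. Suppose f : [r_0, ∞) → ℝ is a differentiable function with f(r) ≥ 0 satisfying f(r) ≤ -(r/a) f'(r) + C_2 r^{-b} for all r ≥ r_0 > 0. Then there exists a constant C_3 such that f(r) ≤ C_3 r^{-a} + (a C_2 / (a-b)) r^{-b} for all r ≥ r_0; in particular f(r) = O(r^{-min{a,b}}) as r → ∞. -/

import Mathlib

open Filter Asymptotics

/-- **ODE Lemma, case (a).** If `a, b > 0`, `a ≠ b`, `C₂ ≥ 0` and a differentiable
`f ≥ 0` on `[r₀, ∞)` satisfies `f(r) ≤ -(r/a) f'(r) + C₂ r^{-b}`, then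
`f(r) ≤ C₃ r^{-a} + (a C₂/(a-b)) r^{-b}`; in particular `f(r) = O(r^{-min(a,b)})`. -/
theorem ode_decay_neq
    (a b C2 r0 : ℝ) (ha : 0 < a) (hb : 0 < b) (hab : a ≠ b) (hC2 : 0 ≤ C2)
    (hr0 : 0 < r0) (f : ℝ → ℝ)
    (hf0 : ∀ r, r0 ≤ r → 0 ≤ f r)
    (hdiff : ∀ r, r0 ≤ r → DifferentiableAt ℝ f r)
    (hineq : ∀ r, r0 ≤ r → f r ≤ -(r / a) * deriv f r + C2 * r ^ (-b)) :
    (∃ C3 : ℝ, ∀ r, r0 ≤ r → f r ≤ C3 * r ^ (-a) + (a * C2 / (a - b)) * r ^ (-b)) ∧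
      f =O[atTop] fun r : ℝ => r ^ (-min a b) := by
  have hab' : a - b ≠ 0 := sub_ne_zero.mpr hab
  have ha' : a ≠ 0 := ha.ne'
  set K : ℝ := a * C2 / (a - b) with hKdef
  set g : ℝ → ℝ := fun r => r ^ a * f r - K * r ^ (a - b) with hgdef
  have hgderiv : ∀ r, r0 ≤ r → HasDerivAt g
      (a * r ^ (a - 1) * f r + r ^ a * deriv f r - K * ((a - b) * r ^ (a - b - 1))) r := by
    intro r hr
    have hrpos : 0 < r := lt_of_lt_of_le hr0 hr
    have h1 : HasDerivAt (fun r : ℝ => r ^ a) (a * r ^ (a - 1)) r :=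
      Real.hasDerivAt_rpow_const (Or.inl hrpos.ne')
    have h2 : HasDerivAt f (deriv f r) r := (hdiff r hr).hasDerivAt
    have h3 : HasDerivAt (fun r : ℝ => r ^ (a - b)) ((a - b) * r ^ (a - b - 1)) r :=
      Real.hasDerivAt_rpow_const (Or.inl hrpos.ne')
    exact (h1.mul h2).sub (h3.const_mul K)
  have hanti : AntitoneOn g (Set.Ici r0) := by
    apply antitoneOn_of_deriv_nonpos (convex_Ici r0)
    · intro r hr
      exact (hgderiv r hr).differentiableAt.continuousAt.continuousWithinAt
    · intro r hr
      rw [interior_Ici] at hr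
      exact (hgderiv r hr.le).differentiableAt.differentiableWithinAt
    · intro r hr
      rw [interior_Ici] at hr
      have hrle : r0 ≤ r := hr.le
      have hrpos : 0 < r := lt_of_lt_of_le hr0 hrle
      rw [(hgderiv r hrle).deriv]
      have h4 : f r + (r / a) * deriv f r ≤ C2 * r ^ (-b) := by
        have := hineq r hrle; linarith
      have hcoef : (0:ℝ) ≤ a * r ^ (a - 1) := by positivity
      have h5 := mul_le_mul_of_nonneg_left h4 hcoef
      have e1 : r ^ (a - 1) * r = r ^ a := by
        rw [← Real.rpow_add_one hrpos.ne' (a - 1)]; ring_nf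
      have e2 : r ^ (a - 1) * r ^ (-b) = r ^ (a - b - 1) := by
        rw [← Real.rpow_add hrpos]; ring_nf
      have e3 : K * (a - b) = a * C2 := by
        rw [hKdef]; field_simp
      have lhs_eq : a * r ^ (a - 1) * (f r + (r / a) * deriv f r)
          = a * r ^ (a - 1) * f r + r ^ a * deriv f r := by
        field_simp
        linear_combination (deriv f r) * e1
      have rhs_eq : a * r ^ (a - 1) * (C2 * r ^ (-b)) = K * ((a - b) * r ^ (a - b - 1)) := by
        linear_combination a * C2 * e2 - r ^ (a - b - 1) * e3
      linarith [h5, lhs_eq, rhs_eq]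
  set C3 : ℝ := g r0 with hC3
  have key : ∀ r, r0 ≤ r → f r ≤ C3 * r ^ (-a) + K * r ^ (-b) := by
    intro r hr
    have hrpos : 0 < r := lt_of_lt_of_le hr0 hr
    have hgle : g r ≤ g r0 := hanti Set.self_mem_Ici hr hr
    have hra : (0:ℝ) < r ^ a := Real.rpow_pos_of_pos hrpos a
    have e1 : r ^ (-a) * r ^ a = 1 := by
      rw [← Real.rpow_add hrpos]; simp
    have e2 : r ^ (-a) * r ^ (a - b) = r ^ (-b) := by
      rw [← Real.rpow_add hrpos]; ring_nf
    have h6 : r ^ a * f r ≤ C3 + K * r ^ (a - b) := by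
      have hC3' : C3 = r0 ^ a * f r0 - K * r0 ^ (a - b) := rfl
      simp only [hgdef] at hgle; linarith
    have h7 := mul_le_mul_of_nonneg_left h6 (le_of_lt (Real.rpow_pos_of_pos hrpos (-a)))
    calc f r = r ^ (-a) * (r ^ a * f r) := by rw [← mul_assoc, e1, one_mul]
      _ ≤ r ^ (-a) * (C3 + K * r ^ (a - b)) := h7
      _ = C3 * r ^ (-a) + K * r ^ (-b) := by rw [mul_add]; rw [show r ^ (-a) * (K * r ^ (a-b)) = K * (r ^ (-a) * r ^ (a-b)) by ring, e2]; ring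
  constructor
  · exact ⟨C3, key⟩
  · apply IsBigO.of_bound (|C3| + |K|)
    filter_upwards [eventually_ge_atTop (max r0 1)] with r hr
    have hr0r : r0 ≤ r := le_trans (le_max_left _ _) hr
    have hr1 : (1:ℝ) ≤ r := le_trans (le_max_right _ _) hr
    have hrpos : 0 < r := lt_of_lt_of_le hr0 hr0r
    have hmin : (0:ℝ) < r ^ (-min a b) := Real.rpow_pos_of_pos hrpos _
    have hma : r ^ (-a) ≤ r ^ (-min a b) :=
      Real.rpow_le_rpow_of_exponent_le hr1 (neg_le_neg (min_le_left a b))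
    have hmb : r ^ (-b) ≤ r ^ (-min a b) :=
      Real.rpow_le_rpow_of_exponent_le hr1 (neg_le_neg (min_le_right a b))
    have hpa : (0:ℝ) ≤ r ^ (-a) := (Real.rpow_pos_of_pos hrpos _).le
    have hpb : (0:ℝ) ≤ r ^ (-b) := (Real.rpow_pos_of_pos hrpos _).le
    rw [Real.norm_eq_abs, Real.norm_eq_abs, abs_of_nonneg (hf0 r hr0r), abs_of_pos hmin]
    have := key r hr0r
    have b1 : C3 * r ^ (-a) ≤ |C3| * r ^ (-min a b) :=
      le_trans (mul_le_mul_of_nonneg_right (le_abs_self C3) hpa)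
        (mul_le_mul_of_nonneg_left hma (abs_nonneg C3))
    have b2 : K * r ^ (-b) ≤ |K| * r ^ (-min a b) :=
      le_trans (mul_le_mul_of_nonneg_right (le_abs_self K) hpb)
        (mul_le_mul_of_nonneg_left hmb (abs_nonneg K))
    nlinarith
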